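/- Let g, k : (0,∞) → (0,∞) be strictly increasing differentiable functions with k'(x) > 0 for all x > 0. Let 0 < u₁ < p < u₂, let h(x,q) = g(q)/(g(q)+k(x)), and for j = 1,2 set f_j(x) = d( h(x,p) | h(x,u_j) ), where d(q|r) = q·log(q/r) + (1−q)·log((1−q)/(1−r)). For j = 1,2 let C_j = ( g(p)·g(u_j) − g(p)² − g(p)·g(u_j)·log(g(u_j)/g(p)) ) / ( g(p) − g(u_j) + g(p)·log(g(u_j)/g(p)) ), and suppose there exist x̄₁*, x̄₂* > 0 with k(x̄_j*) = C_j for j = 1,2 and x̄₁* < x̄₂*. Then the ratio f₁'(x)/f₂'(x) is strictly decreasing on (x̄₁*, x̄₂*). -/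

import Mathlib

/-- Kullback–Leibler divergence between Bernoulli distributions with means `q` and `r`. -/
noncomputable def klBern (q r : ℝ) : ℝ :=
  q * Real.log (q / r) + (1 - q) * Real.log ((1 - q) / (1 - r))

/-- The rescaled derivative of the Kullback–Leibler curve:
`f'(x) = k'(x) * Faux a b (k x) / (a + k x)^2` where `a = g p`, `b = g u`. -/
noncomputable def Faux (a b κ : ℝ) : ℝ :=
  (a - b) + (a - b)^2 / (b + κ) - a * Real.log (a / b)

lemma klBern_formula (a b κ : ℝ) (ha : 0 < a) (hb : 0 < b) (hκ : 0 < κ) :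
    klBern (a/(a+κ)) (b/(b+κ)) =
      Real.log (b+κ) - Real.log (a+κ) + a * (a+κ)⁻¹ * Real.log (a/b) := by
  have haκ : a + κ ≠ 0 := by positivity
  have hbκ : b + κ ≠ 0 := by positivity
  have hκ' : κ ≠ 0 := ne_of_gt hκ
  unfold klBern
  have h1 : 1 - a/(a+κ) = κ/(a+κ) := by field_simp; ring
  have h2 : 1 - b/(b+κ) = κ/(b+κ) := by field_simp; ring
  rw [h1, h2]
  have h3 : a/(a+κ) / (b/(b+κ)) = (a/b) * ((b+κ)/(a+κ)) := by field_simp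
  have h4 : κ/(a+κ) / (κ/(b+κ)) = (b+κ)/(a+κ) := by
    rw [div_div_div_comm, div_self hκ', one_div, inv_div]
  rw [h3, h4, Real.log_mul (by positivity) (by positivity),
    Real.log_div hbκ haκ, Real.log_div (ne_of_gt ha) (ne_of_gt hb)]
  field_simp
  ring

lemma deriv_kl (k : ℝ → ℝ) (hk_pos : ∀ x > (0:ℝ), 0 < k x)
    (hk_diff : ∀ x > (0:ℝ), DifferentiableAt ℝ k x)
    (a b x : ℝ) (ha : 0 < a) (hb : 0 < b) (hx : 0 < x) :
    deriv (fun z => klBern (a/(a+k z)) (b/(b+k z))) x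
      = deriv k x * Faux a b (k x) / (a + k x)^2 := by
  have hκ : 0 < k x := hk_pos x hx
  have haκ : a + k x ≠ 0 := by positivity
  have hbκ : b + k x ≠ 0 := by positivity
  have hev : ∀ᶠ z in nhds x, 0 < k z := by
    filter_upwards [Ioi_mem_nhds hx] with z hz using hk_pos z hz
  have heq : (fun z => klBern (a/(a+k z)) (b/(b+k z)))
      =ᶠ[nhds x] (fun z => Real.log (b + k z) - Real.log (a + k z)
        + a * (a + k z)⁻¹ * Real.log (a/b)) := by
    filter_upwards [hev] with z hz using klBern_formula a b (k z) ha hb hz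
  rw [heq.deriv_eq]
  have hkd := (hk_diff x hx).hasDerivAt
  have h1 : HasDerivAt (fun z => b + k z) (deriv k x) x := hkd.const_add b
  have h2 : HasDerivAt (fun z => Real.log (b + k z)) (deriv k x / (b + k x)) x :=
    h1.log hbκ
  have h3 : HasDerivAt (fun z => a + k z) (deriv k x) x := hkd.const_add a
  have h4 : HasDerivAt (fun z => Real.log (a + k z)) (deriv k x / (a + k x)) x :=
    h3.log haκ
  have h5 : HasDerivAt (fun z => (a + k z)⁻¹) (-(deriv k x) / (a + k x)^2) x :=
    h3.inv haκ
  have h6 : HasDerivAt (fun z => a * (a + k z)⁻¹ * Real.log (a/b))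
      (a * (-(deriv k x) / (a + k x)^2) * Real.log (a/b)) x :=
    (h5.const_mul a).mul_const _
  have H : HasDerivAt (fun z => Real.log (b + k z) - Real.log (a + k z)
      + a * (a + k z)⁻¹ * Real.log (a/b)) _ x := (h2.sub h4).add h6
  rw [H.deriv]
  unfold Faux
  field_simp
  ring

lemma b_add_C (a b C : ℝ) (ha : 0 < a) (hb : 0 < b) (hne : a ≠ b)
    (hC : C = (a*b - a^2 - a*b*Real.log (b/a)) / (a - b + a*Real.log (b/a))) :
    0 < a * Real.log (a/b) - a + b ∧
      b + C = (a - b)^2 / (a * Real.log (a/b) - a + b) := by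
  have hlog : Real.log (b/a) < b/a - 1 :=
    Real.log_lt_sub_one_of_pos (by positivity) (by
      intro h
      apply hne
      field_simp at h
      linarith)
  have hla : Real.log (a/b) = Real.log a - Real.log b := Real.log_div (ne_of_gt ha) (ne_of_gt hb)
  have hlb : Real.log (b/a) = Real.log b - Real.log a := Real.log_div (ne_of_gt hb) (ne_of_gt ha)
  have h2 : a * (b/a - 1) = b - a := by field_simp
  have hD : 0 < a * Real.log (a/b) - a + b := by
    have h3 := (mul_lt_mul_iff_right₀ ha).2 hlog
    rw [hlb] at h3
    rw [hla]
    nlinarith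
  refine ⟨hD, ?_⟩
  have hden : a - b + a*Real.log (b/a) ≠ 0 := by
    rw [hla] at hD; rw [hlb]; intro h; nlinarith
  have hD' : a * Real.log (a/b) - a + b ≠ 0 := ne_of_gt hD
  rw [hC]
  rw [hla] at hD' ⊢
  rw [hlb] at hden ⊢
  rw [eq_div_iff hD', add_div' _ _ _ hden, div_mul_eq_mul_div, div_eq_iff hden]
  ring

lemma Faux_anti (a b κ₁ κ₂ : ℝ) (hne : a ≠ b) (h1 : 0 < b + κ₁) (h12 : κ₁ < κ₂) :
    Faux a b κ₂ < Faux a b κ₁ := by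
  unfold Faux
  have hsq : 0 < (a - b)^2 := by have := sub_ne_zero_of_ne hne; positivity
  have : (a - b)^2 / (b + κ₂) < (a - b)^2 / (b + κ₁) :=
    div_lt_div_of_pos_left hsq h1 (by linarith)
  linarith

lemma Faux_neg (a b C κ : ℝ) (hne : a ≠ b)
    (hD : 0 < a * Real.log (a/b) - a + b)
    (hbC : b + C = (a - b)^2 / (a * Real.log (a/b) - a + b))
    (hκ : C < κ) :
    Faux a b κ < 0 := by
  unfold Faux
  have hsq : 0 < (a - b)^2 := by have := sub_ne_zero_of_ne hne; positivity
  have hbCpos : 0 < b + C := by rw [hbC]; positivity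
  have h1 : (a - b)^2 / (b + κ) < (a - b)^2 / (b + C) :=
    div_lt_div_of_pos_left hsq hbCpos (by linarith)
  have h2 : (a - b)^2 / (b + C) = a * Real.log (a/b) - a + b := by
    rw [hbC]; field_simp
  linarith

lemma Faux_pos (a b C κ : ℝ) (hne : a ≠ b)
    (hD : 0 < a * Real.log (a/b) - a + b)
    (hbC : b + C = (a - b)^2 / (a * Real.log (a/b) - a + b))
    (hκ : κ < C) (hκ0 : 0 < b + κ) :
    0 < Faux a b κ := by
  unfold Faux
  have hsq : 0 < (a - b)^2 := by have := sub_ne_zero_of_ne hne; positivity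
  have h1 : (a - b)^2 / (b + C) < (a - b)^2 / (b + κ) :=
    div_lt_div_of_pos_left hsq hκ0 (by linarith)
  have h2 : (a - b)^2 / (b + C) = a * Real.log (a/b) - a + b := by
    rw [hbC]; field_simp
  linarith

lemma ratio_cancel (c s F₁ F₂ : ℝ) (hc : c ≠ 0) (hs : s ≠ 0) :
    (c * F₁ / s) / (c * F₂ / s) = F₁ / F₂ := by
  rw [div_eq_mul_inv (c * F₁), div_eq_mul_inv (c * F₂),
    mul_div_mul_right _ _ (inv_ne_zero hs), mul_div_mul_left _ _ hc]

/-- Theorem 13(a) for the general family h(x,p) = g(p)/(g(p)+k(x)): the ratio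
f₁'/f₂' of the derivatives of the two Kullback–Leibler divergence curves is
strictly decreasing on (x̄₁*, x̄₂*). -/
theorem ratio_strict_anti_general
    (g k : ℝ → ℝ)
    (hg_pos : ∀ q > (0:ℝ), 0 < g q) (hk_pos : ∀ x > (0:ℝ), 0 < k x)
    (hg_mono : StrictMonoOn g (Set.Ioi 0)) (hk_mono : StrictMonoOn k (Set.Ioi 0))
    (hg_diff : ∀ q > (0:ℝ), DifferentiableAt ℝ g q)
    (hk_diff : ∀ x > (0:ℝ), DifferentiableAt ℝ k x)
    (hk' : ∀ x > (0:ℝ), 0 < deriv k x)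
    (p u₁ u₂ : ℝ) (h0 : 0 < u₁) (h1 : u₁ < p) (h2 : p < u₂)
    (C₁ C₂ x₁s x₂s : ℝ)
    (hC₁ : C₁ = (g p * g u₁ - g p ^ 2 - g p * g u₁ * Real.log (g u₁ / g p)) /
        (g p - g u₁ + g p * Real.log (g u₁ / g p)))
    (hC₂ : C₂ = (g p * g u₂ - g p ^ 2 - g p * g u₂ * Real.log (g u₂ / g p)) /
        (g p - g u₂ + g p * Real.log (g u₂ / g p)))
    (hx₁s : 0 < x₁s) (hx₂s : 0 < x₂s)
    (hk₁ : k x₁s = C₁) (hk₂ : k x₂s = C₂) (hlt : x₁s < x₂s) :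
    StrictAntiOn (fun x =>
        deriv (fun z => klBern (g p / (g p + k z)) (g u₁ / (g u₁ + k z))) x /
        deriv (fun z => klBern (g p / (g p + k z)) (g u₂ / (g u₂ + k z))) x)
      (Set.Ioo x₁s x₂s) := by
  intro x hx y hy hxy
  have hp : 0 < p := lt_trans h0 h1
  have hu₂ : 0 < u₂ := lt_trans hp h2
  have ha : 0 < g p := hg_pos p hp
  have hb₁ : 0 < g u₁ := hg_pos u₁ h0
  have hb₂ : 0 < g u₂ := hg_pos u₂ hu₂
  have hxpos : 0 < x := lt_trans hx₁s hx.1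
  have hypos : 0 < y := lt_trans hx₁s hy.1
  have hb1a : g u₁ < g p := hg_mono (Set.mem_Ioi.2 h0) (Set.mem_Ioi.2 hp) h1
  have hab2 : g p < g u₂ := hg_mono (Set.mem_Ioi.2 hp) (Set.mem_Ioi.2 hu₂) h2
  have hne₁ : g p ≠ g u₁ := ne_of_gt hb1a
  have hne₂ : g p ≠ g u₂ := ne_of_lt hab2
  obtain ⟨hD₁, hbC₁⟩ := b_add_C (g p) (g u₁) C₁ ha hb₁ hne₁ hC₁
  obtain ⟨hD₂, hbC₂⟩ := b_add_C (g p) (g u₂) C₂ ha hb₂ hne₂ hC₂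
  have hkx : 0 < k x := hk_pos x hxpos
  have hky : 0 < k y := hk_pos y hypos
  have hC1x : C₁ < k x := by
    rw [← hk₁]
    exact hk_mono (Set.mem_Ioi.2 hx₁s) (Set.mem_Ioi.2 hxpos) hx.1
  have hkxy : k x < k y :=
    hk_mono (Set.mem_Ioi.2 hxpos) (Set.mem_Ioi.2 hypos) hxy
  have hkyC2 : k y < C₂ := by
    rw [← hk₂]
    exact hk_mono (Set.mem_Ioi.2 hypos) (Set.mem_Ioi.2 hx₂s) hy.2
  have F1x_neg : Faux (g p) (g u₁) (k x) < 0 :=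
    Faux_neg (g p) (g u₁) C₁ (k x) hne₁ hD₁ hbC₁ hC1x
  have F1y_lt : Faux (g p) (g u₁) (k y) < Faux (g p) (g u₁) (k x) :=
    Faux_anti (g p) (g u₁) (k x) (k y) hne₁ (by positivity) hkxy
  have F2x_pos : 0 < Faux (g p) (g u₂) (k x) :=
    Faux_pos (g p) (g u₂) C₂ (k x) hne₂ hD₂ hbC₂ (lt_trans hkxy hkyC2) (by positivity)
  have F2y_pos : 0 < Faux (g p) (g u₂) (k y) :=
    Faux_pos (g p) (g u₂) C₂ (k y) hne₂ hD₂ hbC₂ hkyC2 (by positivity)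
  have F2y_lt : Faux (g p) (g u₂) (k y) < Faux (g p) (g u₂) (k x) :=
    Faux_anti (g p) (g u₂) (k x) (k y) hne₂ (by positivity) hkxy
  simp only
  rw [deriv_kl k hk_pos hk_diff (g p) (g u₁) y ha hb₁ hypos,
    deriv_kl k hk_pos hk_diff (g p) (g u₂) y ha hb₂ hypos,
    deriv_kl k hk_pos hk_diff (g p) (g u₁) x ha hb₁ hxpos,
    deriv_kl k hk_pos hk_diff (g p) (g u₂) x ha hb₂ hxpos,
    ratio_cancel _ _ _ _ (ne_of_gt (hk' y hypos)) (by positivity),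
    ratio_cancel _ _ _ _ (ne_of_gt (hk' x hxpos)) (by positivity),
    div_lt_div_iff₀ F2y_pos F2x_pos]
  nlinarith [mul_lt_mul_of_pos_right F1y_lt F2x_pos,
    mul_lt_mul_of_neg_left F2y_lt F1x_neg]
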